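/- arXiv:2511.04438 — 2 statements merged into one kernel-verified Lean document; each statement's English description precedes it below -/
import Mathlib

section
/- Fix an integer k ≥ 2. Let M_{A→B} be a quantum channel whose Choi state Φ^M_{RB} (with R ≅ A) is k-extendible with respect to the partition R:B. Then for every finite-dimensional reference system S and every state ρ_{SA}, the state (id_S ⊗ M)(ρ_{SA}) is k-extendible with respect to the partition S:B. -/
open scoped Matrix Kronecker BigOperators ComplexOrder
open Matrix

attribute [local instance] Classical.propDecidable

noncomputable section

/-- A quantum state: a positive semidefinite complex matrix with unit trace. -/
def IsState {n : Type*} [Fintype n] (ρ : Matrix n n ℂ) : Prop :=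
  ρ.PosSemidef ∧ ρ.trace = 1

/-- The unitary permuting `k` copies of `B` according to a permutation `π ∈ S_k`. -/
def permMatrix (B : Type*) {k : ℕ} (π : Equiv.Perm (Fin k)) :
    Matrix (Fin k → B) (Fin k → B) ℂ :=
  Matrix.of fun f g => if f = g ∘ π then 1 else 0

/-- Partial trace over all `k` copies of `B` except the copy indexed by `i0`. -/
def marginalAt {A B : Type*} [Fintype B] {k : ℕ} (i0 : Fin k)
    (ω : Matrix (A × (Fin k → B)) (A × (Fin k → B)) ℂ) : Matrix (A × B) (A × B) ℂ :=
  Matrix.of fun p q =>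
    ∑ f : Fin k → B, if f i0 = p.2 then ω (p.1, f) (q.1, Function.update f i0 q.2) else 0

/-- `k`-extendibility of a bipartite state with respect to the partition `A : B`. -/
def IsKExtendible {A B : Type*} [Fintype A] [DecidableEq A] [Fintype B]
    {k : ℕ} (hk : 0 < k) (σ : Matrix (A × B) (A × B) ℂ) : Prop :=
  ∃ ω : Matrix (A × (Fin k → B)) (A × (Fin k → B)) ℂ,
    IsState ω ∧
    marginalAt ⟨0, hk⟩ ω = σ ∧
    ∀ π : Equiv.Perm (Fin k),
      ((1 : Matrix A A ℂ) ⊗ₖ permMatrix B π) * ω * ((1 : Matrix A A ℂ) ⊗ₖ permMatrix B π)ᴴ = ω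

/-- `k`-pure extendibility: the state is the marginal of a permutation-invariant pure state. -/
def IsKPureExtendible {A B : Type*} [Fintype A] [DecidableEq A] [Fintype B]
    {k : ℕ} (hk : 0 < k) (ρ : Matrix (A × B) (A × B) ℂ) : Prop :=
  ∃ ψ : (A × (Fin k → B)) → ℂ,
    (∑ x, Complex.normSq (ψ x)) = 1 ∧
    (∀ π : Equiv.Perm (Fin k),
      ((1 : Matrix A A ℂ) ⊗ₖ permMatrix B π) * Matrix.vecMulVec ψ (star ψ) *
        ((1 : Matrix A A ℂ) ⊗ₖ permMatrix B π)ᴴ = Matrix.vecMulVec ψ (star ψ)) ∧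
    marginalAt ⟨0, hk⟩ (Matrix.vecMulVec ψ (star ψ)) = ρ

/-- The maximally entangled state `(1/|T|) ∑_{i,j} |ii⟩⟨jj|` on `T ⊗ T`. -/
def maxEnt (T : Type*) [Fintype T] [DecidableEq T] : Matrix (T × T) (T × T) ℂ :=
  Matrix.of fun p q => if p.1 = p.2 ∧ q.1 = q.2 then ((Fintype.card T : ℂ))⁻¹ else 0

/-- Square root of a positive semidefinite matrix (junk value `0` off the PSD cone). -/
def psqrt {n : Type*} [Fintype n] [DecidableEq n] (A : Matrix n n ℂ) : Matrix n n ℂ :=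
  if h : A.PosSemidef then
    (h.1.eigenvectorUnitary : Matrix n n ℂ) *
      Matrix.diagonal (((↑) : ℝ → ℂ) ∘ Real.sqrt ∘ h.1.eigenvalues) *
      (star h.1.eigenvectorUnitary : Matrix n n ℂ)
  else 0

/-- Fidelity of states: `F(ρ,σ) = (Tr √(√σ ρ √σ))²`. -/
def fidelity {n : Type*} [Fintype n] [DecidableEq n] (ρ σ : Matrix n n ℂ) : ℝ :=
  ((psqrt (psqrt σ * ρ * psqrt σ)).trace).re ^ 2

/-- Partial trace over the second tensor factor. -/
def ptraceRight {α β : Type*} [Fintype β] (M : Matrix (α × β) (α × β) ℂ) :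
    Matrix α α ℂ :=
  Matrix.of fun a a' => ∑ b, M (a, b) (a', b)

/-- A twisting unitary `V = ∑_i I_A ⊗ |i⟩⟨i|_B ⊗ U^i_{A'B'}` (the shield system `S = A'B'`). -/
def IsTwistingUnitary {d : ℕ} {S : Type*} [Fintype S]
    (V : Matrix ((Fin d × Fin d) × S) ((Fin d × Fin d) × S) ℂ) : Prop :=
  ∃ U : Fin d → Matrix S S ℂ,
    (∀ i, (U i)ᴴ * U i = 1 ∧ U i * (U i)ᴴ = 1) ∧
    V = Matrix.of fun p q => if p.1 = q.1 then (U p.1.2) p.2 q.2 else 0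

/-- The privacy test `Π^γ = V (Φ^d ⊗ I) V†` associated with a twisting unitary `V`. -/
def privacyTest {d : ℕ} {S : Type*} [Fintype S] [DecidableEq S]
    (V : Matrix ((Fin d × Fin d) × S) ((Fin d × Fin d) × S) ℂ) :
    Matrix ((Fin d × Fin d) × S) ((Fin d × Fin d) × S) ℂ :=
  V * (maxEnt (Fin d) ⊗ₖ (1 : Matrix S S ℂ)) * Vᴴ

/-- A private state of `log₂ d` secret bits: `γ = V (Φ^d ⊗ τ) V†`. -/
def IsPrivateState {d : ℕ} {SA SB : Type*} [Fintype SA] [Fintype SB]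
    (γ : Matrix ((Fin d × Fin d) × (SA × SB)) ((Fin d × Fin d) × (SA × SB)) ℂ) : Prop :=
  ∃ (V : Matrix ((Fin d × Fin d) × (SA × SB)) ((Fin d × Fin d) × (SA × SB)) ℂ)
    (τ : Matrix (SA × SB) (SA × SB) ℂ),
    IsTwistingUnitary V ∧ IsState τ ∧ γ = V * (maxEnt (Fin d) ⊗ₖ τ) * Vᴴ

/-- The ε-hypothesis-testing relative entropy `D^ε_H(ρ‖σ)`. -/
def DH {n : Type*} [Fintype n] [DecidableEq n] (ε : ℝ) (ρ σ : Matrix n n ℂ) : ℝ :=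
  -Real.logb 2 (sInf { x : ℝ | ∃ Λ : Matrix n n ℂ, Λ.PosSemidef ∧
      ((1 : Matrix n n ℂ) - Λ).PosSemidef ∧
      1 - ε ≤ ((Λ * ρ).trace).re ∧ x = ((Λ * σ).trace).re })

/-- The `k`-unextendible hypothesis-testing divergence of a bipartite state. -/
def EHk {A B : Type*} [Fintype A] [DecidableEq A] [Fintype B] [DecidableEq B]
    {k : ℕ} (hk : 0 < k) (ε : ℝ) (ρ : Matrix (A × B) (A × B) ℂ) : ℝ :=
  sInf { x : ℝ | ∃ σ : Matrix (A × B) (A × B) ℂ, IsKExtendible hk σ ∧ x = DH ε ρ σ }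

/-- `id_R ⊗ Φ` applied entrywise via the blocks of `M`. -/
def tensorId {R n m : Type*} (Φ : Matrix n n ℂ → Matrix m m ℂ)
    (M : Matrix (R × n) (R × n) ℂ) : Matrix (R × m) (R × m) ℂ :=
  Matrix.of fun p q => Φ (Matrix.of fun i j => M (p.1, i) (q.1, j)) p.2 q.2

/-- `Φ ⊗ id_R` applied entrywise via the blocks of `M`. -/
def idTensor {R n m : Type*} (Φ : Matrix n n ℂ → Matrix m m ℂ)
    (M : Matrix (n × R) (n × R) ℂ) : Matrix (m × R) (m × R) ℂ :=
  Matrix.of fun p q => Φ (Matrix.of fun i j => M (i, p.2) (j, q.2)) p.1 q.1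

/-- Tensor product `E ⊗ F` of two maps on matrices. -/
def prodMap {A B A' B' : Type*} (E : Matrix A A ℂ → Matrix A' A' ℂ)
    (F : Matrix B B ℂ → Matrix B' B' ℂ)
    (M : Matrix (A × B) (A × B) ℂ) : Matrix (A' × B') (A' × B') ℂ :=
  idTensor E (tensorId F M)

/-- Linearity of a map on matrices. -/
def IsLinearMat {n m : Type*} (Φ : Matrix n n ℂ → Matrix m m ℂ) : Prop :=
  ∀ (c : ℂ) (M N : Matrix n n ℂ), Φ (c • M + N) = c • Φ M + Φ N

/-- Complete positivity of a linear map on matrices. -/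
def IsCPMap {n m : Type*} [Fintype n] [Fintype m] (Φ : Matrix n n ℂ → Matrix m m ℂ) : Prop :=
  IsLinearMat Φ ∧ ∀ (r : ℕ) (M : Matrix (Fin r × n) (Fin r × n) ℂ),
    M.PosSemidef → (tensorId Φ M).PosSemidef

/-- A quantum channel: a completely positive trace-preserving linear map. -/
def IsChannel {n m : Type*} [Fintype n] [Fintype m] (Φ : Matrix n n ℂ → Matrix m m ℂ) : Prop :=
  IsCPMap Φ ∧ ∀ M : Matrix n n ℂ, (Φ M).trace = M.trace

/-- A one-way LOCC channel `∑_x E^x ⊗ F^x` from `A ⊗ B` to `A' ⊗ B'`. -/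
def IsOneWayLOCC {A B A' B' : Type*} [Fintype A] [Fintype B] [Fintype A'] [Fintype B']
    (L : Matrix (A × B) (A × B) ℂ → Matrix (A' × B') (A' × B') ℂ) : Prop :=
  ∃ (m : ℕ) (E : Fin m → (Matrix A A ℂ → Matrix A' A' ℂ))
    (F : Fin m → (Matrix B B ℂ → Matrix B' B' ℂ)),
    (∀ x, IsCPMap (E x)) ∧
    (∀ M : Matrix A A ℂ, (∑ x, E x M).trace = M.trace) ∧
    (∀ x, IsChannel (F x)) ∧
    ∀ M, L M = ∑ x, prodMap (E x) (F x) M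

/-- The Choi state of a channel `N : A → B`. -/
def choiState {A B : Type*} [Fintype A] [DecidableEq A]
    (N : Matrix A A ℂ → Matrix B B ℂ) : Matrix (A × B) (A × B) ℂ :=
  tensorId N (maxEnt A)

/-- Hypothesis-testing divergence of channels: sup over reference systems and input states. -/
def chDivH {A B : Type*} [Fintype A] [Fintype B] [DecidableEq B] (ε : ℝ)
    (N M : Matrix A A ℂ → Matrix B B ℂ) : ℝ :=
  sSup { x : ℝ | ∃ (r : ℕ) (ρ : Matrix (Fin r × A) (Fin r × A) ℂ),
    IsState ρ ∧ x = DH ε (tensorId N ρ) (tensorId M ρ) }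

/-- The `k`-unextendible hypothesis-testing divergence of a channel. -/
def EHkCh {A B : Type*} [Fintype A] [DecidableEq A] [Fintype B] [DecidableEq B]
    {k : ℕ} (hk : 0 < k) (ε : ℝ) (N : Matrix A A ℂ → Matrix B B ℂ) : ℝ :=
  sInf { x : ℝ | ∃ M : Matrix A A ℂ → Matrix B B ℂ,
    IsChannel M ∧ IsKExtendible hk (choiState M) ∧ x = chDivH ε N M }

/-- Real power of a Hermitian matrix by functional calculus on its support
(zero eigenvalues are sent to zero; junk value `0` for non-Hermitian input). -/
def mpow {n : Type*} [Fintype n] [DecidableEq n] (A : Matrix n n ℂ) (r : ℝ) :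
    Matrix n n ℂ :=
  if hA : A.IsHermitian then
    (hA.eigenvectorUnitary : Matrix n n ℂ) *
      Matrix.diagonal (fun i =>
        if hA.eigenvalues i = 0 then (0 : ℂ) else ((hA.eigenvalues i ^ r : ℝ) : ℂ)) *
      (star hA.eigenvectorUnitary : Matrix n n ℂ)
  else 0

/-- The sandwiched Rényi relative entropy `D̃_α(ρ‖σ)`. -/
def sandwichedRenyi {n : Type*} [Fintype n] [DecidableEq n] (α : ℝ)
    (ρ σ : Matrix n n ℂ) : ℝ :=
  (α - 1)⁻¹ * Real.logb 2
    ((mpow (mpow σ ((1 - α) / (2 * α)) * ρ * mpow σ ((1 - α) / (2 * α))) α).trace).re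

/-- The `k`-unextendible sandwiched Rényi divergence of a bipartite state. -/
def sandEk {A B : Type*} [Fintype A] [DecidableEq A] [Fintype B] [DecidableEq B]
    {k : ℕ} (hk : 0 < k) (α : ℝ) (ρ : Matrix (A × B) (A × B) ℂ) : ℝ :=
  sInf { x : ℝ | ∃ σ : Matrix (A × B) (A × B) ℂ,
    IsKExtendible hk σ ∧ x = sandwichedRenyi α ρ σ }

/-- Sandwiched Rényi divergence of channels. -/
def sandDivCh {A B : Type*} [Fintype A] [Fintype B] [DecidableEq B] (α : ℝ)
    (N M : Matrix A A ℂ → Matrix B B ℂ) : ℝ :=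
  sSup { x : ℝ | ∃ (r : ℕ) (ρ : Matrix (Fin r × A) (Fin r × A) ℂ),
    IsState ρ ∧ x = sandwichedRenyi α (tensorId N ρ) (tensorId M ρ) }

/-- The `k`-unextendible sandwiched Rényi divergence of a channel. -/
def sandEkCh {A B : Type*} [Fintype A] [DecidableEq A] [Fintype B] [DecidableEq B]
    {k : ℕ} (hk : 0 < k) (α : ℝ) (N : Matrix A A ℂ → Matrix B B ℂ) : ℝ :=
  sInf { x : ℝ | ∃ M : Matrix A A ℂ → Matrix B B ℂ,
    IsChannel M ∧ IsKExtendible hk (choiState M) ∧ x = sandDivCh α N M }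

/-- The geometric Rényi relative entropy `D̂_α(ρ‖σ)` (`⊤` if `supp ρ ⊄ supp σ`). -/
def geomRenyi {n : Type*} [Fintype n] [DecidableEq n] (α : ℝ)
    (ρ σ : Matrix n n ℂ) : EReal :=
  if ∀ v : n → ℂ, σ.mulVec v = 0 → ρ.mulVec v = 0 then
    (((α - 1)⁻¹ * Real.logb 2
      ((σ * mpow (mpow σ (-(1 / 2)) * ρ * mpow σ (-(1 / 2))) α).trace).re : ℝ) : EReal)
  else ⊤

/-- Geometric Rényi divergence of channels. -/
def geomDivCh {A B : Type*} [Fintype A] [Fintype B] [DecidableEq B] (α : ℝ)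
    (N M : Matrix A A ℂ → Matrix B B ℂ) : EReal :=
  sSup { x : EReal | ∃ (r : ℕ) (ρ : Matrix (Fin r × A) (Fin r × A) ℂ),
    IsState ρ ∧ x = geomRenyi α (tensorId N ρ) (tensorId M ρ) }

/-- The `k`-unextendible geometric Rényi divergence of a channel. -/
def geomEkCh {A B : Type*} [Fintype A] [DecidableEq A] [Fintype B] [DecidableEq B]
    {k : ℕ} (hk : 0 < k) (α : ℝ) (N : Matrix A A ℂ → Matrix B B ℂ) : EReal :=
  sInf { x : EReal | ∃ M : Matrix A A ℂ → Matrix B B ℂ,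
    IsChannel M ∧ IsKExtendible hk (choiState M) ∧ x = geomDivCh α N M }

/-- The `n`-fold tensor power `ρ^{⊗n}` of a bipartite state, with the partition `A^n : B^n`. -/
def statePow {A B : Type*} (ρ : Matrix (A × B) (A × B) ℂ) (n : ℕ) :
    Matrix ((Fin n → A) × (Fin n → B)) ((Fin n → A) × (Fin n → B)) ℂ :=
  Matrix.of fun p q => ∏ i, ρ (p.1 i, p.2 i) (q.1 i, q.2 i)

/-- The `n`-fold tensor power `N^{⊗n}` of a channel. -/
def chTensorPow {A B : Type*} [Fintype A] [DecidableEq A]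
    (N : Matrix A A ℂ → Matrix B B ℂ) (n : ℕ)
    (M : Matrix (Fin n → A) (Fin n → A) ℂ) : Matrix (Fin n → B) (Fin n → B) ℂ :=
  Matrix.of fun f g => ∑ p : Fin n → A, ∑ q : Fin n → A,
    M p q * ∏ i, N (Matrix.single (p i) (q i) 1) (f i) (g i)

/-- The `d`-dimensional erasure channel with erasure probability `p`. -/
def erasureCh (d : ℕ) (p : ℝ) (ρ : Matrix (Fin d) (Fin d) ℂ) :
    Matrix (Fin (d + 1)) (Fin (d + 1)) ℂ :=
  Matrix.of fun i j =>
    if hi : (i : ℕ) < d then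
      (if hj : (j : ℕ) < d then ((1 - p : ℝ) : ℂ) * ρ ⟨i, hi⟩ ⟨j, hj⟩ else 0)
    else (if (j : ℕ) < d then 0 else (p : ℂ) * ρ.trace)

/-- `n`-fold product of the Bernoulli distribution `(x, y)` (`false ↦ x`, `true ↦ y`). -/
def bernProd (x y : ℝ) (n : ℕ) : (Fin n → Bool) → ℝ :=
  fun f => ∏ i, if f i then y else x

/-- The classical ε-hypothesis-testing relative entropy. -/
def DHclassical {X : Type*} [Fintype X] (ε : ℝ) (P Q : X → ℝ) : ℝ :=
  -Real.logb 2 (sInf { x : ℝ | ∃ t : X → ℝ,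
    (∀ i, 0 ≤ t i ∧ t i ≤ 1) ∧ 1 - ε ≤ ∑ i, t i * P i ∧ x = ∑ i, t i * Q i })

/-- Reordering `(X × K) × B ≃ K × (B × X)` used in forward-assisted protocols. -/
def protoReorder (X K B : Type*) : ((X × K) × B) ≃ (K × (B × X)) where
  toFun p := (p.1.2, (p.2, p.1.1))
  invFun q := ((q.2.2, q.1), q.2.1)
  left_inv _ := rfl
  right_inv _ := rfl

/-- The output of a one-shot forward-assisted secret-key protocol: the cq input state
`∑_x p_x |x⟩⟨x|_X ⊗ ρ^x_{A'A''A}` is sent through `id ⊗ N` and decoded by `D_{BX→B'B''}`. -/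
def protocolOutput {A B : Type*} {m d : ℕ} {SA SB : Type*}
    (N : Matrix A A ℂ → Matrix B B ℂ)
    (pr : Fin m → ℝ)
    (ρx : Fin m → Matrix ((Fin d × SA) × A) ((Fin d × SA) × A) ℂ)
    (D : Matrix (B × Fin m) (B × Fin m) ℂ → Matrix (Fin d × SB) (Fin d × SB) ℂ) :
    Matrix ((Fin d × SA) × (Fin d × SB)) ((Fin d × SA) × (Fin d × SB)) ℂ :=
  tensorId D (Matrix.reindex (protoReorder (Fin m) (Fin d × SA) B)
    (protoReorder (Fin m) (Fin d × SA) B)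
    (tensorId N (Matrix.of fun (p q : (Fin m × (Fin d × SA)) × A) =>
      if p.1.1 = q.1.1 then (pr p.1.1 : ℂ) * ρx p.1.1 (p.1.2, p.2) (q.1.2, q.2) else 0)))

/-- The Choi state of the `d`-dimensional erasure channel with erasure probability `1 - 1/k`:
`(1/k) Φ^d + (1 - 1/k)(I/d) ⊗ |e⟩⟨e|`. -/
def erasureChoi (d k : ℕ) : Matrix (Fin d × Fin (d + 1)) (Fin d × Fin (d + 1)) ℂ :=
  Matrix.of fun p q =>
    (k : ℂ)⁻¹ * ((d : ℂ)⁻¹ *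
      (if p.2 = Fin.castSucc p.1 ∧ q.2 = Fin.castSucc q.1 then 1 else 0)) +
    (1 - (k : ℂ)⁻¹) * ((d : ℂ)⁻¹ *
      (if p.1 = q.1 ∧ p.2 = Fin.last d ∧ q.2 = Fin.last d then 1 else 0))

/-- The explicit `k`-extension `(1/k) ∑_i Φ^d_{AB_i} ⊗ (⊗_{j≠i} |e⟩⟨e|_{B_j})`. -/
def erasureExt (d k : ℕ) :
    Matrix (Fin d × (Fin k → Fin (d + 1))) (Fin d × (Fin k → Fin (d + 1))) ℂ :=
  Matrix.of fun p q => (k : ℂ)⁻¹ * ∑ i : Fin k,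
    ((if p.2 i = Fin.castSucc p.1 ∧ q.2 i = Fin.castSucc q.1 then (d : ℂ)⁻¹ else 0) *
      ∏ j ∈ Finset.univ.erase i,
        (if p.2 j = Fin.last d ∧ q.2 j = Fin.last d then 1 else 0))

end


section PSDSqrtPort

open scoped MatrixOrder ComplexOrder

noncomputable def Matrix.PosSemidef.sqrt {n : Type*} [Fintype n] [DecidableEq n]
    {A : Matrix n n ℂ} (_h : A.PosSemidef) : Matrix n n ℂ :=
  CFC.sqrt A

lemma Matrix.PosSemidef.sqrt_mul_self {n : Type*} [Fintype n] [DecidableEq n]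
    {A : Matrix n n ℂ} (h : A.PosSemidef) : h.sqrt * h.sqrt = A :=
  CFC.sqrt_mul_sqrt_self A h.nonneg

lemma Matrix.PosSemidef.posSemidef_sqrt {n : Type*} [Fintype n] [DecidableEq n]
    {A : Matrix n n ℂ} (h : A.PosSemidef) : h.sqrt.PosSemidef :=
  (CFC.sqrt_nonneg A).posSemidef

end PSDSqrtPort

section KExtAux

open scoped Matrix Kronecker ComplexOrder
open Matrix

lemma perm_conj_entry {X B : Type*} [Fintype X] [DecidableEq X] [Fintype B] [DecidableEq B] {k : ℕ}
    (π : Equiv.Perm (Fin k)) (ω : Matrix (X × (Fin k → B)) (X × (Fin k → B)) ℂ)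
    (x y : X) (f g : Fin k → B) :
    (((1 : Matrix X X ℂ) ⊗ₖ permMatrix B π) * ω * ((1 : Matrix X X ℂ) ⊗ₖ permMatrix B π)ᴴ)
      ((x,f)) ((y,g)) = ω (x, f ∘ ⇑π⁻¹) (y, g ∘ ⇑π⁻¹) := by
  have hcond : ∀ (h t : Fin k → B), (h = t ∘ ⇑π) ↔ (t = h ∘ ⇑π⁻¹) := by
    intro h t
    constructor <;> intro e <;> subst e <;> funext i <;> simp
  simp only [Matrix.mul_apply, Matrix.conjTranspose_apply, kroneckerMap_apply,
    permMatrix, Matrix.of_apply, Matrix.one_apply, Fintype.sum_prod_type, hcond,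
    apply_ite (star : ℂ → ℂ), star_one, star_zero, star_mul', ite_mul, mul_ite, one_mul, mul_one,
    zero_mul, mul_zero, Finset.sum_ite_eq, Finset.sum_ite_eq', Finset.mem_univ, if_true]

lemma sum_swap4 {ι₁ ι₂ ι₃ ι₄ : Type*} [Fintype ι₁] [Fintype ι₂] [Fintype ι₃] [Fintype ι₄]
    (F : ι₁ → ι₂ → ι₃ → ι₄ → ℂ) :
    ∑ a, ∑ b, ∑ c, ∑ d, F a b c d = ∑ c, ∑ d, ∑ a, ∑ b, F a b c d := by
  trans ∑ a, ∑ c, ∑ d, ∑ b, F a b c d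
  · refine Finset.sum_congr rfl fun a _ => ?_
    rw [Finset.sum_comm]
    exact Finset.sum_congr rfl fun c _ => Finset.sum_comm
  · rw [Finset.sum_comm]
    exact Finset.sum_congr rfl fun c _ => Finset.sum_comm

lemma linear_apply_eq_sum {n m : Type*} [Fintype n] [DecidableEq n]
    (Φ : Matrix n n ℂ → Matrix m m ℂ) (hΦ : IsLinearMat Φ) (X : Matrix n n ℂ) :
    Φ X = ∑ a : n, ∑ a' : n, X a a' • Φ (Matrix.single a a' 1) := by
  have h0 : Φ 0 = 0 := by
    have h := hΦ 1 0 0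
    simp only [one_smul, add_zero] at h
    exact left_eq_add.mp h
  have hadd : ∀ X Y, Φ (X + Y) = Φ X + Φ Y := by
    intro X Y
    have h := hΦ 1 X Y
    simpa using h
  have hsmul : ∀ (c : ℂ) (X : Matrix n n ℂ), Φ (c • X) = c • Φ X := by
    intro c X
    have h := hΦ c X 0
    simpa [h0] using h
  have hsum : ∀ (s : Finset n) (g : n → Matrix n n ℂ),
      Φ (∑ i ∈ s, g i) = ∑ i ∈ s, Φ (g i) := by
    intro s g
    induction s using Finset.cons_induction with
    | empty => simpa using h0
    | cons a s ha ih => rw [Finset.sum_cons, Finset.sum_cons, hadd, ih]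
  conv_lhs => rw [Matrix.matrix_eq_sum_single X]
  rw [hsum]
  refine Finset.sum_congr rfl fun a _ => ?_
  rw [hsum]
  refine Finset.sum_congr rfl fun a' _ => ?_
  have h1 : Matrix.single a a' (X a a') = (X a a') • Matrix.single a a' (1 : ℂ) := by
    rw [Matrix.smul_single, smul_eq_mul, mul_one]
  rw [h1, hsmul]

lemma psd_entry_eq {n : Type*} [Fintype n] [DecidableEq n] {ρ : Matrix n n ℂ}
    (h : ρ.PosSemidef) (p q : n) :
    ρ p q = ∑ t, star (h.sqrt t p) * h.sqrt t q := by
  conv_lhs => rw [← h.sqrt_mul_self]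
  rw [Matrix.mul_apply]
  refine Finset.sum_congr rfl fun t _ => ?_
  congr 1
  calc h.sqrt p t = h.sqrtᴴ p t := by rw [h.posSemidef_sqrt.1]
    _ = star (h.sqrt t p) := Matrix.conjTranspose_apply _ _ _

end KExtAux

/-- If the Choi state of a channel is `k`-extendible, then every output of the
channel (acting on one share of any bipartite state) is `k`-extendible. -/
theorem kExtendible_output_of_kExtendible_choi
    {A B : Type*} [Fintype A] [DecidableEq A] [Fintype B] [DecidableEq B]
    {k : ℕ} (hk : 2 ≤ k)
    (M : Matrix A A ℂ → Matrix B B ℂ) (hM : IsChannel M)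
    (hChoi : IsKExtendible (show 0 < k by omega) (choiState M)) :
    ∀ (S : Type) [Fintype S] [DecidableEq S],
    ∀ ρ : Matrix (S × A) (S × A) ℂ, IsState ρ →
      IsKExtendible (show 0 < k by omega) (tensorId M ρ) := by
  intro S _ _ ρ hρ
  classical
  obtain ⟨ω, ⟨hωPSD, hωtr⟩, hωmarg, hωperm⟩ := hChoi
  obtain ⟨⟨hMlin, _hMcp⟩, hMtr⟩ := hM
  have hk0 : 0 < k := by omega
  have hAne : Nonempty A := by
    by_contra h
    rw [not_nonempty_iff] at h
    have h0 : ρ.trace = 0 := by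
      simp [Matrix.trace, Matrix.diag, Fintype.sum_prod_type]
    rw [hρ.2] at h0
    exact one_ne_zero (α := ℂ) h0
  set cA : ℂ := (Fintype.card A : ℂ) with hcAdef
  have hcA0 : cA ≠ 0 := Nat.cast_ne_zero.mpr Fintype.card_ne_zero
  have hMsmul : ∀ (c : ℂ) (X : Matrix A A ℂ), M (c • X) = c • M X := by
    intro c X
    have h0 : M 0 = 0 := by
      have h := hMlin 1 0 0
      simp only [one_smul, add_zero] at h
      exact left_eq_add.mp h
    have h := hMlin c X 0
    simpa [h0] using h
  have hchoi_entry : ∀ (a a' : A) (b b' : B),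
      choiState M (a, b) (a', b') = cA⁻¹ * (M (Matrix.single a a' 1)) b b' := by
    intro a a' b b'
    have hblock : (Matrix.of fun i j => maxEnt A (a, i) (a', j)) =
        (cA⁻¹ : ℂ) • Matrix.single a a' (1 : ℂ) := by
      ext i j
      simp [maxEnt, Matrix.single, mul_ite, hcAdef]
    show (tensorId M (maxEnt A)) (a, b) (a', b') = _
    simp only [tensorId, Matrix.of_apply]
    rw [hblock, hMsmul]
    simp
  have htrstd : ∀ a a' : A, (M (Matrix.single a a' (1 : ℂ))).trace
      = (if a = a' then 1 else 0) := by
    intro a a'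
    rw [hMtr]
    simp only [Matrix.trace, Matrix.diag, Matrix.single, Matrix.of_apply]
    by_cases h : a = a'
    · subst h
      simp
    · rw [if_neg h]
      apply Finset.sum_eq_zero
      intro i _
      rw [if_neg]
      rintro ⟨rfl, rfl⟩
      exact h rfl
  have hωdiag : ∀ a a' : A, (∑ f : Fin k → B, ω (a, f) (a', f))
      = cA⁻¹ * (if a = a' then 1 else 0) := by
    intro a a'
    have h1 : (∑ b : B, (marginalAt (⟨0, hk0⟩ : Fin k) ω) (a, b) (a', b))
        = ∑ f : Fin k → B, ω (a, f) (a', f) := by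
      simp only [marginalAt, Matrix.of_apply]
      rw [Finset.sum_comm]
      refine Finset.sum_congr rfl fun f _ => ?_
      simp [Finset.sum_ite_eq, Function.update_eq_self]
    have h2 : (∑ b : B, choiState M (a, b) (a', b)) = cA⁻¹ * (if a = a' then 1 else 0) := by
      simp only [hchoi_entry]
      rw [← Finset.mul_sum]
      congr 1
      have h := htrstd a a'
      simpa [Matrix.trace, Matrix.diag] using h
    rw [← h1, hωmarg]
    exact h2
  have hρPSD := hρ.1
  set sc : ℂ := ((Real.sqrt (Fintype.card A) : ℝ) : ℂ) with hscdef
  have hsc : sc * sc = cA := by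
    rw [hscdef, ← Complex.ofReal_mul, Real.mul_self_sqrt (Nat.cast_nonneg _), hcAdef]
    norm_cast
  have hscstar : star sc = sc := by
    rw [hscdef, Complex.star_def, Complex.conj_ofReal]
  set R : Matrix ((S × A) × (A × (Fin k → B))) (S × (Fin k → B)) ℂ :=
    Matrix.of fun t p => sc * ∑ a : A, hρPSD.sqrt t.1 (p.1, a) * hωPSD.sqrt t.2 (a, p.2)
    with hRdef
  set Ω : Matrix (S × (Fin k → B)) (S × (Fin k → B)) ℂ :=
    Matrix.of fun p q => cA * ∑ a : A, ∑ a' : A, ρ (p.1, a) (q.1, a') * ω (a, p.2) (a', q.2)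
    with hΩdef
  have hΩR : Ω = Rᴴ * R := by
    ext ⟨s, f⟩ ⟨s', g⟩
    rw [Matrix.mul_apply, Fintype.sum_prod_type]
    simp only [hΩdef, hRdef, Matrix.of_apply, Matrix.conjTranspose_apply]
    simp only [psd_entry_eq hρPSD, psd_entry_eq hωPSD]
    have rhs_eq : ∀ (t : S × A) (u : A × (Fin k → B)),
        star (sc * ∑ a : A, hρPSD.sqrt t ((s, f).1, a) * hωPSD.sqrt u (a, (s, f).2)) *
          (sc * ∑ a' : A, hρPSD.sqrt t ((s', g).1, a') * hωPSD.sqrt u (a', (s', g).2))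
        = ∑ a : A, ∑ a' : A,
            cA * ((star (hρPSD.sqrt t (s, a)) * hρPSD.sqrt t (s', a')) *
              (star (hωPSD.sqrt u (a, f)) * hωPSD.sqrt u (a', g))) := by
      intro t u
      rw [star_mul', hscstar, star_sum]
      have hst : ∀ a : A, star (hρPSD.sqrt t ((s, f).1, a) * hωPSD.sqrt u (a, (s, f).2))
          = star (hρPSD.sqrt t (s, a)) * star (hωPSD.sqrt u (a, f)) := fun a => star_mul' _ _
      simp only [hst]
      rw [mul_mul_mul_comm, hsc, Finset.sum_mul_sum, Finset.mul_sum]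
      refine Finset.sum_congr rfl fun a _ => ?_
      rw [Finset.mul_sum]
      refine Finset.sum_congr rfl fun a' _ => ?_
      ring
    trans ∑ t : S × A, ∑ u : A × (Fin k → B), ∑ a : A, ∑ a' : A,
        cA * ((star (hρPSD.sqrt t (s, a)) * hρPSD.sqrt t (s', a')) *
          (star (hωPSD.sqrt u (a, f)) * hωPSD.sqrt u (a', g)))
    · rw [← sum_swap4 (fun a a' t u => cA *
        ((star (hρPSD.sqrt t (s, a)) * hρPSD.sqrt t (s', a')) *
          (star (hωPSD.sqrt u (a, f)) * hωPSD.sqrt u (a', g))))]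
      rw [Finset.mul_sum]
      refine Finset.sum_congr rfl fun a _ => ?_
      rw [Finset.mul_sum]
      refine Finset.sum_congr rfl fun a' _ => ?_
      rw [Finset.sum_mul_sum, Finset.mul_sum]
      refine Finset.sum_congr rfl fun t _ => ?_
      rw [Finset.mul_sum]
    · exact Finset.sum_congr rfl fun t _ => Finset.sum_congr rfl fun u _ => (rhs_eq t u).symm
  have hΩtr : Ω.trace = 1 := by
    have htr1 : Ω.trace = ∑ s : S, ∑ f : Fin k → B,
        cA * ∑ a : A, ∑ a' : A, ρ (s, a) (s, a') * ω (a, f) (a', f) := by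
      rw [Matrix.trace, Fintype.sum_prod_type]
      simp [hΩdef, Matrix.diag]
    rw [htr1]
    have h2 : ∀ s : S, (∑ f : Fin k → B, cA * ∑ a : A, ∑ a' : A,
        ρ (s, a) (s, a') * ω (a, f) (a', f))
        = ∑ a : A, ∑ a' : A, cA * (ρ (s, a) (s, a') * (cA⁻¹ * (if a = a' then 1 else 0))) := by
      intro s
      calc (∑ f : Fin k → B, cA * ∑ a : A, ∑ a' : A, ρ (s, a) (s, a') * ω (a, f) (a', f))
          = cA * ∑ f : Fin k → B, ∑ a : A, ∑ a' : A, ρ (s, a) (s, a') * ω (a, f) (a', f) := by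
            rw [Finset.mul_sum]
        _ = cA * ∑ a : A, ∑ a' : A, ∑ f : Fin k → B, ρ (s, a) (s, a') * ω (a, f) (a', f) := by
            congr 1
            rw [Finset.sum_comm]
            exact Finset.sum_congr rfl fun a _ => Finset.sum_comm
        _ = ∑ a : A, ∑ a' : A, cA * (ρ (s, a) (s, a') * (cA⁻¹ * (if a = a' then 1 else 0))) := by
            rw [Finset.mul_sum]
            refine Finset.sum_congr rfl fun a _ => ?_
            rw [Finset.mul_sum]
            refine Finset.sum_congr rfl fun a' _ => ?_
            rw [← Finset.mul_sum, hωdiag a a']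
    simp only [h2]
    have h3 : ∀ (s : S) (a a' : A),
        cA * (ρ (s, a) (s, a') * (cA⁻¹ * (if a = a' then 1 else 0)))
        = if a = a' then ρ (s, a) (s, a') else 0 := by
      intro s a a'
      by_cases h : a = a'
      · subst h
        field_simp
        simp
      · simp [h]
    simp only [h3]
    have h4 : ∀ s : S, (∑ a : A, ∑ a' : A, if a = a' then ρ (s, a) (s, a') else 0)
        = ∑ a : A, ρ (s, a) (s, a) := by
      intro s
      refine Finset.sum_congr rfl fun a _ => ?_
      simp [Finset.sum_ite_eq]
    simp only [h4]
    have h5 : (∑ s : S, ∑ a : A, ρ (s, a) (s, a)) = ρ.trace := by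
      rw [Matrix.trace, Fintype.sum_prod_type]
      rfl
    rw [h5, hρ.2]
  have hΩmarg : marginalAt (⟨0, hk0⟩ : Fin k) Ω = tensorId M ρ := by
    ext ⟨s, b⟩ ⟨s', b'⟩
    simp only [marginalAt, Matrix.of_apply, hΩdef]
    have hL : (∑ f : Fin k → B, if f ⟨0, hk0⟩ = b then
          cA * ∑ a : A, ∑ a' : A, ρ (s, a) (s', a') *
            ω (a, f) (a', Function.update f ⟨0, hk0⟩ b') else 0)
        = cA * ∑ a : A, ∑ a' : A, ρ (s, a) (s', a') *
            (marginalAt (⟨0, hk0⟩ : Fin k) ω) (a, b) (a', b') := by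
      simp only [marginalAt, Matrix.of_apply]
      calc (∑ f : Fin k → B, if f ⟨0, hk0⟩ = b then
            cA * ∑ a : A, ∑ a' : A, ρ (s, a) (s', a') *
              ω (a, f) (a', Function.update f ⟨0, hk0⟩ b') else 0)
          = ∑ f : Fin k → B, ∑ a : A, ∑ a' : A, cA * (ρ (s, a) (s', a') *
              (if f ⟨0, hk0⟩ = b then ω (a, f) (a', Function.update f ⟨0, hk0⟩ b') else 0)) := by
            refine Finset.sum_congr rfl fun f _ => ?_
            by_cases h : f ⟨0, hk0⟩ = b
            · rw [if_pos h, Finset.mul_sum]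
              refine Finset.sum_congr rfl fun a _ => ?_
              rw [Finset.mul_sum]
              refine Finset.sum_congr rfl fun a' _ => ?_
              rw [if_pos h]
            · simp [h]
        _ = ∑ a : A, ∑ a' : A, ∑ f : Fin k → B, cA * (ρ (s, a) (s', a') *
              (if f ⟨0, hk0⟩ = b then ω (a, f) (a', Function.update f ⟨0, hk0⟩ b') else 0)) := by
            rw [Finset.sum_comm]
            exact Finset.sum_congr rfl fun a _ => Finset.sum_comm
        _ = cA * ∑ a : A, ∑ a' : A, ρ (s, a) (s', a') *
              (∑ f : Fin k → B, if f ⟨0, hk0⟩ = b then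
                ω (a, f) (a', Function.update f ⟨0, hk0⟩ b') else 0) := by
            rw [Finset.mul_sum]
            refine Finset.sum_congr rfl fun a _ => ?_
            rw [Finset.mul_sum]
            refine Finset.sum_congr rfl fun a' _ => ?_
            rw [Finset.mul_sum, Finset.mul_sum]
    rw [hL, hωmarg]
    simp only [hchoi_entry]
    simp only [tensorId, Matrix.of_apply]
    rw [linear_apply_eq_sum M hMlin]
    simp only [Matrix.sum_apply, Matrix.smul_apply, smul_eq_mul, Matrix.of_apply]
    rw [Finset.mul_sum]
    refine Finset.sum_congr rfl fun a _ => ?_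
    rw [Finset.mul_sum]
    refine Finset.sum_congr rfl fun a' _ => ?_
    field_simp
  have hΩperm : ∀ π : Equiv.Perm (Fin k),
      ((1 : Matrix S S ℂ) ⊗ₖ permMatrix B π) * Ω *
        ((1 : Matrix S S ℂ) ⊗ₖ permMatrix B π)ᴴ = Ω := by
    intro π
    ext ⟨s, f⟩ ⟨s', g⟩
    rw [perm_conj_entry]
    simp only [hΩdef, Matrix.of_apply]
    congr 1
    refine Finset.sum_congr rfl fun a _ => Finset.sum_congr rfl fun a' _ => ?_
    congr 1
    have h := perm_conj_entry π ω a a' f g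
    rw [hωperm π] at h
    exact h.symm
  refine ⟨Ω, ⟨?_, hΩtr⟩, hΩmarg, hΩperm⟩
  rw [hΩR]
  exact Matrix.posSemidef_conjTranspose_mul_self R
end

section
/- Fix integers k ≥ 2 and d ≥ 1. The Choi state of the d-dimensional erasure channel with erasure probability 1−1/k, namely (1/k) Φ^d_{AB} + (1−1/k) (I_A/d) ⊗ |e⟩⟨e|_B, is k-extendible with respect to the partition A:B; an explicit k-extension is (1/k) Σ_{i=1}^k Φ^d_{AB_i} ⊗ (⊗_{j≠i} |e⟩⟨e|_{B_j}). -/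
open scoped Matrix Kronecker BigOperators ComplexOrder
open Matrix

attribute [local instance] Classical.propDecidable

namespace ErasureAux

open Function

variable {d k : ℕ}

/-- The basis function: `castSucc a` in slot `i`, `last d` elsewhere. -/
def updFun (d k : ℕ) (i : Fin k) (a : Fin d) : Fin k → Fin (d + 1) :=
  Function.update (fun _ => Fin.last d) i (Fin.castSucc a)

lemma eq_updFun_iff (f : Fin k → Fin (d + 1)) (i : Fin k) (a : Fin d) :
    f = updFun d k i a ↔ f i = Fin.castSucc a ∧ ∀ j, j ≠ i → f j = Fin.last d :=
  Function.eq_update_iff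

lemma updFun_apply (i : Fin k) (a : Fin d) (j : Fin k) :
    updFun d k i a j = if j = i then Fin.castSucc a else Fin.last d := by
  simp [updFun, Function.update_apply]

lemma ite_mul_boole {A B : Prop} [Decidable A] [Decidable B] (c : ℂ) :
    (if A then c else 0) * (if B then 1 else 0) = if A ∧ B then c else 0 := by
  split_ifs <;> simp_all

lemma ext_entry (d k : ℕ) (p q : Fin d × (Fin k → Fin (d + 1))) :
    erasureExt d k p q = (k : ℂ)⁻¹ *
      ∑ i : Fin k, (if p.2 = updFun d k i p.1 ∧ q.2 = updFun d k i q.1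
        then (d : ℂ)⁻¹ else 0) := by
  simp only [erasureExt, Matrix.of_apply]
  congr 1
  refine Finset.sum_congr rfl fun i _ => ?_
  by_cases hC : ∀ j, j ≠ i → (p.2 j = Fin.last d ∧ q.2 j = Fin.last d)
  · rw [Finset.prod_eq_one (fun j hj => if_pos (hC j (Finset.mem_erase.mp hj).1)), mul_one]
    refine if_congr ?_ rfl rfl
    rw [eq_updFun_iff, eq_updFun_iff]
    constructor
    · rintro ⟨h1, h2⟩
      exact ⟨⟨h1, fun j hj => (hC j hj).1⟩, h2, fun j hj => (hC j hj).2⟩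
    · rintro ⟨⟨h1, _⟩, h2, _⟩; exact ⟨h1, h2⟩
  · push_neg at hC
    obtain ⟨j, hj, hcond0⟩ := hC
    have hcond : ¬ (p.2 j = Fin.last d ∧ q.2 j = Fin.last d) := fun h => hcond0 h.1 h.2
    have hneg : ¬ (p.2 = updFun d k i p.1 ∧ q.2 = updFun d k i q.1) := by
      rw [eq_updFun_iff, eq_updFun_iff]
      rintro ⟨⟨-, h2⟩, -, h4⟩
      exact hcond ⟨h2 j hj, h4 j hj⟩
    rw [Finset.prod_eq_zero (Finset.mem_erase.mpr ⟨hj, Finset.mem_univ j⟩)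
      (show (if p.2 j = Fin.last d ∧ q.2 j = Fin.last d then (1 : ℂ) else 0) = 0
        from if_neg hcond), mul_zero, if_neg hneg]

lemma ext_posSemidef (hk : 2 ≤ k) (hd : 1 ≤ d) : (erasureExt d k).PosSemidef := by
  have hkd : (0:ℝ) ≤ (k : ℝ) * d := by positivity
  set s : ℝ := (Real.sqrt ((k:ℝ) * d))⁻¹ with hs
  have hss : (s:ℂ) * (s:ℂ) = (k:ℂ)⁻¹ * (d:ℂ)⁻¹ := by
    have h1 : s * s = ((k:ℝ) * d)⁻¹ := by
      rw [hs, ← mul_inv, Real.mul_self_sqrt hkd]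
    calc (s:ℂ) * s = ((s * s : ℝ) : ℂ) := by push_cast; ring
    _ = ((((k:ℝ) * d)⁻¹ : ℝ) : ℂ) := by rw [h1]
    _ = (k:ℂ)⁻¹ * (d:ℂ)⁻¹ := by push_cast; rw [mul_inv]
  have hrep : erasureExt d k = ∑ i : Fin k,
      Matrix.vecMulVec (fun p : Fin d × (Fin k → Fin (d + 1)) =>
        if p.2 = updFun d k i p.1 then (s:ℂ) else 0)
        (star fun p : Fin d × (Fin k → Fin (d + 1)) =>
        if p.2 = updFun d k i p.1 then (s:ℂ) else 0) := by
    ext p q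
    rw [ext_entry, Finset.mul_sum, Matrix.sum_apply]
    refine Finset.sum_congr rfl fun i _ => ?_
    simp only [Matrix.vecMulVec_apply, Pi.star_apply]
    by_cases hP : p.2 = updFun d k i p.1 <;>
      by_cases hQ : q.2 = updFun d k i q.1 <;>
      simp [hP, hQ, ← hss, Complex.star_def, Complex.conj_ofReal]
  rw [hrep]
  refine Finset.sum_induction _ _ (fun a b ha hb => ha.add hb) Matrix.PosSemidef.zero
    fun i _ => ?_
  rw [Matrix.vecMulVec_eq Unit, ← Matrix.conjTranspose_replicateCol]
  exact Matrix.posSemidef_self_mul_conjTranspose _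

lemma ext_trace (hk : 2 ≤ k) (hd : 1 ≤ d) : (erasureExt d k).trace = 1 := by
  have hk0 : (k:ℂ) ≠ 0 := Nat.cast_ne_zero.2 (by omega)
  have hd0 : (d:ℂ) ≠ 0 := Nat.cast_ne_zero.2 (by omega)
  rw [Matrix.trace]
  simp only [Matrix.diag_apply]
  rw [Fintype.sum_prod_type]
  simp only [ext_entry, and_self]
  have hrow : ∀ a : Fin d, ∑ f : Fin k → Fin (d + 1),
      ((k:ℂ)⁻¹ * ∑ i : Fin k, if f = updFun d k i a then (d:ℂ)⁻¹ else 0)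
      = (k:ℂ)⁻¹ * ((k : ℂ) * (d:ℂ)⁻¹) := by
    intro a
    rw [← Finset.mul_sum, Finset.sum_comm]
    simp [Finset.sum_ite_eq', Finset.card_univ]
  simp only [hrow, Finset.sum_const, Finset.card_univ, Fintype.card_fin, nsmul_eq_mul]
  field_simp

lemma permMul_apply (π : Equiv.Perm (Fin k))
    (M : Matrix (Fin d × (Fin k → Fin (d + 1))) (Fin d × (Fin k → Fin (d + 1))) ℂ)
    (p q : Fin d × (Fin k → Fin (d + 1))) :
    (((1 : Matrix (Fin d) (Fin d) ℂ) ⊗ₖ permMatrix (Fin (d + 1)) π) * M) p q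
      = M (p.1, p.2 ∘ ⇑π⁻¹) q := by
  rw [Matrix.mul_apply, Fintype.sum_prod_type]
  have key : ∀ h : Fin k → Fin (d + 1), (p.2 = h ∘ ⇑π) ↔ h = p.2 ∘ ⇑π⁻¹ := by
    intro h
    constructor
    · intro e; funext x; rw [e]; simp
    · rintro rfl; funext x; simp
  simp only [Matrix.kroneckerMap_apply, Matrix.one_apply, permMatrix, Matrix.of_apply, key,
    ite_mul, one_mul, zero_mul, Finset.sum_ite_eq', Finset.mem_univ, if_true]
  simp [Finset.sum_ite_eq]

lemma mulPermH_apply (π : Equiv.Perm (Fin k))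
    (M : Matrix (Fin d × (Fin k → Fin (d + 1))) (Fin d × (Fin k → Fin (d + 1))) ℂ)
    (p q : Fin d × (Fin k → Fin (d + 1))) :
    (M * ((1 : Matrix (Fin d) (Fin d) ℂ) ⊗ₖ permMatrix (Fin (d + 1)) π)ᴴ) p q
      = M p (q.1, q.2 ∘ ⇑π⁻¹) := by
  rw [Matrix.mul_apply, Fintype.sum_prod_type]
  have key : ∀ h : Fin k → Fin (d + 1), (q.2 = h ∘ ⇑π) ↔ h = q.2 ∘ ⇑π⁻¹ := by
    intro h
    constructor
    · intro e; funext x; rw [e]; simp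
    · rintro rfl; funext x; simp
  simp only [Matrix.conjTranspose_apply, Matrix.kroneckerMap_apply, Matrix.one_apply,
    permMatrix, Matrix.of_apply, key]
  simp [apply_ite (starRingEnd ℂ), mul_ite, mul_one, mul_zero, Finset.sum_ite_eq',
    Finset.sum_ite_eq, eq_comm]

lemma updFun_comp (σ : Equiv.Perm (Fin k)) (i : Fin k) (a : Fin d) :
    updFun d k i a ∘ ⇑σ = updFun d k (σ⁻¹ i) a := by
  funext j
  simp only [Function.comp_apply, updFun_apply]
  congr 1
  rw [eq_iff_iff]
  constructor
  · intro h; rw [← h]; simp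
  · rintro rfl; simp

lemma comp_eq_iff (σ : Equiv.Perm (Fin k)) (f g : Fin k → Fin (d + 1)) :
    f ∘ ⇑σ = g ↔ f = g ∘ ⇑σ⁻¹ := by
  constructor
  · rintro rfl; funext x; simp
  · rintro rfl; funext x; simp

lemma ext_comp (σ : Equiv.Perm (Fin k)) (p q : Fin d × (Fin k → Fin (d + 1))) :
    erasureExt d k (p.1, p.2 ∘ ⇑σ) (q.1, q.2 ∘ ⇑σ) = erasureExt d k p q := by
  rw [ext_entry, ext_entry]
  congr 1
  have h2 : ∀ (f : Fin k → Fin (d + 1)) (i : Fin k) (a : Fin d),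
      (f ∘ ⇑σ = updFun d k i a) ↔ f = updFun d k (σ i) a := by
    intro f i a
    rw [comp_eq_iff, updFun_comp σ⁻¹, inv_inv]
  simp only [h2]
  exact Equiv.sum_comp σ fun i =>
    if p.2 = updFun d k i p.1 ∧ q.2 = updFun d k i q.1 then (d:ℂ)⁻¹ else 0

lemma ext_perm (π : Equiv.Perm (Fin k)) :
    ((1 : Matrix (Fin d) (Fin d) ℂ) ⊗ₖ permMatrix (Fin (d + 1)) π) * erasureExt d k *
      ((1 : Matrix (Fin d) (Fin d) ℂ) ⊗ₖ permMatrix (Fin (d + 1)) π)ᴴ = erasureExt d k := by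
  ext p q
  rw [Matrix.mul_assoc, permMul_apply, mulPermH_apply]
  exact ext_comp π⁻¹ p q

lemma ext_marginal (hk : 2 ≤ k) (hd : 1 ≤ d) (i0 : Fin k) :
    marginalAt i0 (erasureExt d k) = erasureChoi d k := by
  have hk0 : (k:ℂ) ≠ 0 := Nat.cast_ne_zero.2 (by omega)
  have hd0 : (d:ℂ) ≠ 0 := Nat.cast_ne_zero.2 (by omega)
  ext ⟨a, b⟩ ⟨a', b'⟩
  simp only [marginalAt, Matrix.of_apply, ext_entry]
  have hsplit : ∀ f : Fin k → Fin (d + 1),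
      (if f i0 = b then (k:ℂ)⁻¹ * ∑ i : Fin k,
        (if f = updFun d k i a ∧ Function.update f i0 b' = updFun d k i a'
          then (d:ℂ)⁻¹ else 0) else 0)
      = (k:ℂ)⁻¹ * ∑ i : Fin k, (if f = updFun d k i a then
          (if f i0 = b ∧ Function.update f i0 b' = updFun d k i a' then (d:ℂ)⁻¹ else 0)
          else 0) := by
    intro f
    by_cases hc : f i0 = b
    · rw [if_pos hc]
      congr 1
      refine Finset.sum_congr rfl fun i _ => ?_
      by_cases h1 : f = updFun d k i a
      · subst h1; simp [hc]
      · simp [h1]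
    · rw [if_neg hc]
      simp [hc]
  simp only [hsplit]
  rw [← Finset.mul_sum, Finset.sum_comm]
  have hcollapse : ∀ i : Fin k, (∑ f : Fin k → Fin (d + 1), if f = updFun d k i a then
      (if f i0 = b ∧ Function.update f i0 b' = updFun d k i a' then (d:ℂ)⁻¹ else 0) else 0)
      = (if (updFun d k i a) i0 = b ∧
          Function.update (updFun d k i a) i0 b' = updFun d k i a' then (d:ℂ)⁻¹ else 0) := by
    intro i
    rw [Finset.sum_ite_eq' Finset.univ (updFun d k i a)
      (fun f => if f i0 = b ∧ Function.update f i0 b' = updFun d k i a' then (d:ℂ)⁻¹ else 0)]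
    simp
  simp only [hcollapse]
  rw [← Finset.sum_erase_add Finset.univ _ (Finset.mem_univ i0)]
  have hG0 : (if (updFun d k i0 a) i0 = b ∧
      Function.update (updFun d k i0 a) i0 b' = updFun d k i0 a' then (d:ℂ)⁻¹ else 0)
      = (if b = Fin.castSucc a ∧ b' = Fin.castSucc a' then (d:ℂ)⁻¹ else 0) := by
    have e1 : Function.update (updFun d k i0 a) i0 b'
        = Function.update (fun _ : Fin k => Fin.last d) i0 b' := by
      rw [updFun, Function.update_idem]
    refine if_congr ?_ rfl rfl
    rw [e1]
    constructor
    · rintro ⟨h1, h2⟩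
      constructor
      · rw [← h1]; simp [updFun]
      · have h3 := congrFun h2 i0
        simpa [updFun] using h3
    · rintro ⟨rfl, rfl⟩
      exact ⟨by simp [updFun], rfl⟩
  have hGi : ∀ i ∈ Finset.univ.erase i0, (if (updFun d k i a) i0 = b ∧
      Function.update (updFun d k i a) i0 b' = updFun d k i a' then (d:ℂ)⁻¹ else 0)
      = (if a = a' ∧ b = Fin.last d ∧ b' = Fin.last d then (d:ℂ)⁻¹ else 0) := by
    intro i hi
    have hii : i ≠ i0 := (Finset.mem_erase.mp hi).1
    have hne : i0 ≠ i := hii.symm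
    refine if_congr ?_ rfl rfl
    constructor
    · rintro ⟨h1, h2⟩
      have hb : b = Fin.last d := by rw [← h1, updFun_apply, if_neg hne]
      have h5 : Fin.castSucc a = Fin.castSucc a' := by
        have h3 := congrFun h2 i
        simpa [Function.update_of_ne hii, updFun_apply] using h3
      have hb' : b' = Fin.last d := by
        have h4 := congrFun h2 i0
        rw [Function.update_self] at h4
        rw [h4, updFun_apply, if_neg hne]
      exact ⟨Fin.castSucc_inj.mp h5, hb, hb'⟩
    · rintro ⟨rfl, rfl, rfl⟩
      constructor
      · rw [updFun_apply, if_neg hne]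
      · funext j
        by_cases hj : j = i0
        · subst hj; rw [Function.update_self, updFun_apply, if_neg hne]
        · simp [Function.update_of_ne hj, updFun_apply]
  rw [Finset.sum_congr rfl hGi, Finset.sum_const,
    Finset.card_erase_of_mem (Finset.mem_univ i0), Finset.card_univ, Fintype.card_fin, hG0]
  simp only [erasureChoi, Matrix.of_apply, nsmul_eq_mul]
  have hcast : ((k - 1 : ℕ) : ℂ) = (k:ℂ) - 1 := by
    rw [Nat.cast_sub (by omega : 1 ≤ k)]; simp
  rw [hcast]
  split_ifs <;> field_simp <;> ring

lemma choi_eq (hk : 2 ≤ k) (hd : 1 ≤ d) :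
    choiState (erasureCh d (1 - 1 / (k : ℝ))) = erasureChoi d k := by
  have hk0 : (k:ℂ) ≠ 0 := Nat.cast_ne_zero.2 (by omega)
  have hd0 : (d:ℂ) ≠ 0 := Nat.cast_ne_zero.2 (by omega)
  ext ⟨a, b⟩ ⟨a', b'⟩
  simp only [choiState, tensorId, erasureCh, maxEnt, erasureChoi, Matrix.of_apply,
    Fintype.card_fin]
  have htr : (Matrix.of fun i j : Fin d =>
      if a = i ∧ a' = j then ((d:ℕ):ℂ)⁻¹ else 0).trace
      = if a = a' then (d:ℂ)⁻¹ else 0 := by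
    simp only [Matrix.trace, Matrix.diag_apply, Matrix.of_apply, ite_and]
    rw [Finset.sum_ite_eq Finset.univ a (fun i => if a' = i then ((d:ℕ):ℂ)⁻¹ else 0)]
    simp [eq_comm]
  have hlastb : ∀ (x : Fin (d+1)), ¬ ((x:ℕ) < d) → x = Fin.last d := by
    intro x hx
    have h := x.isLt
    refine Fin.ext ?_
    rw [Fin.val_last]
    omega
  have hcslt : ∀ (x : Fin d) (y : Fin (d+1)), y = Fin.castSucc x → (y:ℕ) < d := by
    rintro x y rfl
    simpa using x.isLt
  by_cases hb : (b:ℕ) < d <;> by_cases hb' : (b':ℕ) < d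
  · rw [dif_pos hb, dif_pos hb']
    have h1 : (b = Fin.castSucc a ∧ b' = Fin.castSucc a') ↔ (a = ⟨b, hb⟩ ∧ a' = ⟨b', hb'⟩) := by
      constructor
      · rintro ⟨rfl, rfl⟩; exact ⟨rfl, rfl⟩
      · rintro ⟨rfl, rfl⟩; exact ⟨Fin.ext rfl, Fin.ext rfl⟩
    have h2 : ¬ (a = a' ∧ b = Fin.last d ∧ b' = Fin.last d) := by
      rintro ⟨-, rfl, -⟩
      rw [Fin.val_last] at hb
      omega
    rw [if_neg h2]
    by_cases h3 : a = ⟨b, hb⟩ ∧ a' = ⟨b', hb'⟩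
    · rw [if_pos h3, if_pos (h1.mpr h3)]; push_cast; ring
    · rw [if_neg h3, if_neg (fun h => h3 (h1.mp h))]; ring
  · rw [dif_pos hb, dif_neg hb']
    have h1 : ¬ (b = Fin.castSucc a ∧ b' = Fin.castSucc a') := fun h => hb' (hcslt a' b' h.2)
    have h2 : ¬ (a = a' ∧ b = Fin.last d ∧ b' = Fin.last d) := by
      rintro ⟨-, rfl, -⟩
      rw [Fin.val_last] at hb
      omega
    rw [if_neg h1, if_neg h2]; ring
  · rw [dif_neg hb, if_pos hb']
    have h1 : ¬ (b = Fin.castSucc a ∧ b' = Fin.castSucc a') := fun h => hb (hcslt a b h.1)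
    have h2 : ¬ (a = a' ∧ b = Fin.last d ∧ b' = Fin.last d) := by
      rintro ⟨-, -, rfl⟩
      rw [Fin.val_last] at hb'
      omega
    rw [if_neg h1, if_neg h2]; ring
  · rw [dif_neg hb, if_neg hb', htr]
    have h1 : ¬ (b = Fin.castSucc a ∧ b' = Fin.castSucc a') := fun h => hb (hcslt a b h.1)
    have h2 : (a = a' ∧ b = Fin.last d ∧ b' = Fin.last d) ↔ a = a' :=
      ⟨fun h => h.1, fun h => ⟨h, hlastb b hb, hlastb b' hb'⟩⟩
    rw [if_neg h1]
    by_cases h3 : a = a'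
    · rw [if_pos h3, if_pos (h2.mpr h3)]; push_cast; ring
    · rw [if_neg h3, if_neg (fun h => h3 (h2.mp h))]; ring

end ErasureAux

/-- The Choi state of the `d`-dimensional erasure channel with erasure
probability `1 - 1/k`, namely `(1/k)Φ^d + (1-1/k)(I/d) ⊗ |e⟩⟨e|`, is `k`-extendible, with
the explicit `k`-extension `(1/k) ∑_i Φ^d_{AB_i} ⊗ (⊗_{j≠i} |e⟩⟨e|_{B_j})`. -/
theorem erasure_choi_kExtendible
    {k d : ℕ} (hk : 2 ≤ k) (hd : 1 ≤ d) :
    choiState (erasureCh d (1 - 1 / (k : ℝ))) = erasureChoi d k ∧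
    IsState (erasureExt d k) ∧
    (∀ π : Equiv.Perm (Fin k),
      ((1 : Matrix (Fin d) (Fin d) ℂ) ⊗ₖ permMatrix (Fin (d + 1)) π) * erasureExt d k *
        ((1 : Matrix (Fin d) (Fin d) ℂ) ⊗ₖ permMatrix (Fin (d + 1)) π)ᴴ = erasureExt d k) ∧
    marginalAt (⟨0, by omega⟩ : Fin k) (erasureExt d k) = erasureChoi d k ∧
    IsKExtendible (show 0 < k by omega) (erasureChoi d k) := by
  have hstate : IsState (erasureExt d k) :=
    ⟨ErasureAux.ext_posSemidef hk hd, ErasureAux.ext_trace hk hd⟩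
  have hperm := fun π : Equiv.Perm (Fin k) => ErasureAux.ext_perm (d := d) π
  have hmarg := ErasureAux.ext_marginal hk hd (⟨0, by omega⟩ : Fin k)
  exact ⟨ErasureAux.choi_eq hk hd, hstate, hperm, hmarg,
    erasureExt d k, hstate, hmarg, hperm⟩
end
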